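/- arXiv:2511.06862 — 5 statements merged into one kernel-verified Lean document; each statement's English description precedes it below -/
import Mathlib

section
/- Suppose the local respect condition LR holds for a state machine M with information-flow configuration Info. If dom(a) ∉ sources(a :: as, d), then for every state s, every s' ∈ step(s, a), and every domain u ∈ sources(as, d), the states s and s' are u-indistinguishable: s ∼ᵘ s'. -/
/-- `sources dom flow as d` : the set of domains allowed to transfer
information to domain `d` over the action trace `as`. -/
def sources {A D : Type*} (dom : A → D) (flow : D → D → Prop) :
    List A → D → Set D
  | [], d => {d}
  | a :: as, d =>
      sources dom flow as d ∪
        {w | w = dom a ∧ ∃ v, flow w v ∧ v ∈ sources dom flow as d}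

/-- Local respect: an action may affect a domain `d` only if the acting
domain is allowed to send information to `d`. -/
def LR {S A D : Type*} (step : S → A → Set S) (dom : A → D)
    (flow : D → D → Prop) (ind : D → S → S → Prop) : Prop :=
  ∀ a d s s', s' ∈ step s a → ¬ flow (dom a) d → ind d s s'

theorem stmt_3 {S A D : Type*}
    (step : S → A → Set S) (dom : A → D) (flow : D → D → Prop)
    (ind : D → S → S → Prop) (hequiv : ∀ d, Equivalence (ind d))
    (hLR : LR step dom flow ind)
    (a : A) (as : List A) (d : D)
    (hnot : dom a ∉ sources dom flow (a :: as) d)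
    (s s' : S) (hstep : s' ∈ step s a)
    (u : D) (hu : u ∈ sources dom flow as d) :
    ind u s s' := by
  apply hLR a u s s' hstep
  intro hf
  exact hnot (Or.inr ⟨rfl, u, hf, hu⟩)
end

section
/- Suppose both the step-consistency condition SC and the local respect condition LR hold for a state machine M with information-flow configuration Info. Then for every action list as, every domain d, and all states s, t, if s ∼ᵘ t for every domain u ∈ sources(as, d), then every state s' ∈ run(s, as) and every state t' ∈ run(t, ipurge(as, d)) satisfy s' ∼ᵈ t'. -/
open Classical in
/-- `ipurge dom flow as d` : the purged trace retaining the actions whose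
domain belongs to `sources`. -/
noncomputable def ipurge {A D : Type*} (dom : A → D) (flow : D → D → Prop) :
    List A → D → List A
  | [], _ => []
  | a :: as, d =>
      if dom a ∈ sources dom flow (a :: as) d then a :: ipurge dom flow as d
      else ipurge dom flow as d

/-- Multi-step execution. -/
def run {S A : Type*} (step : S → A → Set S) : S → List A → Set S
  | s, [] => {s}
  | s, a :: as => ⋃ s' ∈ step s a, run step s' as

/-- Step consistency. -/
def SC {S A D : Type*} (step : S → A → Set S) (dom : A → D)
    (flow : D → D → Prop) (ind : D → S → S → Prop) : Prop :=
  ∀ a d s₁ s₂ s₁' s₂', ind d s₁ s₂ → s₁' ∈ step s₁ a → s₂' ∈ step s₂ a →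
    (flow (dom a) d → ind (dom a) s₁ s₂) → ind d s₁' s₂'

theorem stmt_4 {S A D : Type*}
    (step : S → A → Set S) (dom : A → D) (flow : D → D → Prop)
    (ind : D → S → S → Prop) (hequiv : ∀ d, Equivalence (ind d))
    (hSC : SC step dom flow ind) (hLR : LR step dom flow ind)
    (as : List A) (d : D) (s t : S)
    (hsrc : ∀ u ∈ sources dom flow as d, ind u s t)
    (s' : S) (hs' : s' ∈ run step s as)
    (t' : S) (ht' : t' ∈ run step t (ipurge dom flow as d)) :
    ind d s' t' := by
  induction as generalizing s t s' t' with
  | nil =>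
      simp only [run, Set.mem_singleton_iff] at hs'
      simp only [ipurge, run, Set.mem_singleton_iff] at ht'
      subst hs'; subst ht'
      exact hsrc d (by simp [sources])
  | cons a as ih =>
      simp only [run, Set.mem_iUnion, exists_prop] at hs'
      obtain ⟨s₁, hs₁, hs'⟩ := hs'
      by_cases hmem : dom a ∈ sources dom flow (a :: as) d
      · rw [ipurge, if_pos hmem] at ht'
        simp only [run, Set.mem_iUnion, exists_prop] at ht'
        obtain ⟨t₁, ht₁, ht'⟩ := ht'
        refine ih s₁ t₁ (fun u hu => ?_) s' hs' t' ht'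
        refine hSC a u s t s₁ t₁ (hsrc u (Or.inl hu)) hs₁ ht₁ (fun hf => ?_)
        exact hsrc (dom a) (Or.inr ⟨rfl, u, hf, hu⟩)
      · rw [ipurge, if_neg hmem] at ht'
        refine ih s₁ t (fun u hu => ?_) s' hs' t' ht'
        have hnf : ¬ flow (dom a) u := fun hf => hmem (Or.inr ⟨rfl, u, hf, hu⟩)
        exact (hequiv u).trans ((hequiv u).symm (hLR a u s s₁ hs₁ hnf))
          (hsrc u (Or.inl hu))
end

section
/- (Unwinding Theorem of Noninterference) If a state machine M with information-flow configuration Info satisfies both the step-consistency condition SC(M, Info) and the local respect condition LR(M, Info), then M satisfies intransitive noninterference NI(M, Info): for every action list as and every domain d, every state s ∈ run(s₀, as) and every state t ∈ run(s₀, ipurge(as, d)) satisfy s ∼ᵈ t. -/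
lemma sources_self {A D : Type*} (dom : A → D) (flow : D → D → Prop) :
    ∀ (as : List A) (d : D), d ∈ sources dom flow as d := by
  intro as d
  induction as with
  | nil => exact rfl
  | cons a as ih => exact Or.inl ih

lemma unwind_aux {S A D : Type*}
    (step : S → A → Set S) (dom : A → D) (flow : D → D → Prop)
    (ind : D → S → S → Prop) (hequiv : ∀ d, Equivalence (ind d))
    (hSC : SC step dom flow ind) (hLR : LR step dom flow ind) :
    ∀ (as : List A) (d : D) (s t : S),
      (∀ v ∈ sources dom flow as d, ind v s t) →
      ∀ s' ∈ run step s as, ∀ t' ∈ run step t (ipurge dom flow as d),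
        ind d s' t' := by
  intro as
  induction as with
  | nil =>
    intro d s t h s' hs' t' ht'
    simp only [run, Set.mem_singleton_iff] at hs' ht'
    subst hs'; subst ht'
    exact h d (sources_self dom flow [] d)
  | cons a as ih =>
    intro d s t h s' hs' t' ht'
    simp only [run, Set.mem_iUnion] at hs'
    obtain ⟨s₁, hs₁, hs'⟩ := hs'
    by_cases hmem : dom a ∈ sources dom flow (a :: as) d
    · rw [ipurge, if_pos hmem] at ht'
      simp only [run, Set.mem_iUnion] at ht'
      obtain ⟨t₁, ht₁, ht'⟩ := ht'
      refine ih d s₁ t₁ ?_ s' hs' t' ht'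
      intro v hv
      exact hSC a v s t s₁ t₁ (h v (Or.inl hv)) hs₁ ht₁
        (fun _ => h (dom a) hmem)
    · rw [ipurge, if_neg hmem] at ht'
      refine ih d s₁ t ?_ s' hs' t' ht'
      intro v hv
      have hnf : ¬ flow (dom a) v := fun hf =>
        hmem (Or.inr ⟨rfl, v, hf, hv⟩)
      exact (hequiv v).trans ((hequiv v).symm (hLR a v s s₁ hs₁ hnf))
        (h v (Or.inl hv))

/-- Unwinding theorem of intransitive noninterference. -/
theorem stmt_5 {S A D : Type*}
    (step : S → A → Set S) (s₀ : S) (dom : A → D) (flow : D → D → Prop)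
    (ind : D → S → S → Prop) (hequiv : ∀ d, Equivalence (ind d))
    (hSC : SC step dom flow ind) (hLR : LR step dom flow ind) :
    ∀ (as : List A) (d : D),
      ∀ s ∈ run step s₀ as, ∀ t ∈ run step s₀ (ipurge dom flow as d),
        ind d s t := by
  intro as d s hs t ht
  exact unwind_aux step dom flow ind hequiv hSC hLR as d s₀ s₀
    (fun v _ => (hequiv v).refl s₀) s hs t ht
end

section
/- Suppose conditions (1), (2), and (3) of the unwinding-preserving simulation hold between a concrete system M_c and an abstract system M_a with state relation α and step mapping ζ. Then for every concrete action list as_c and every s ∈ run_c(s₀, as_c), there exists a state σ ∈ run_a(σ₀, filterMap ζ as_c) with (s, σ) ∈ α, where filterMap ζ as_c is the abstract action list obtained by applying ζ to each action of as_c and discarding silent steps. -/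
theorem stmt_7 {S T Ac Aa : Type*}
    (step_c : S → Ac → Set S) (s₀ : S)
    (step_a : T → Aa → Set T) (σ₀ : T)
    (α : Set (S × T)) (ζ : Ac → Option Aa)
    (cond1 : (s₀, σ₀) ∈ α)
    (cond2 : ∀ s σ a_c s', (s, σ) ∈ α → s' ∈ step_c s a_c → ζ a_c = none →
      (s', σ) ∈ α)
    (cond3 : ∀ s σ a_c a_a s', (s, σ) ∈ α → s' ∈ step_c s a_c →
      ζ a_c = some a_a → ∃ σ' ∈ step_a σ a_a, (s', σ') ∈ α) :
    ∀ (as_c : List Ac) (s : S), s ∈ run step_c s₀ as_c →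
      ∃ σ ∈ run step_a σ₀ (as_c.filterMap ζ), (s, σ) ∈ α := by
  suffices h : ∀ (as_c : List Ac) (s₁ : S) (σ₁ : T), (s₁, σ₁) ∈ α →
      ∀ s ∈ run step_c s₁ as_c, ∃ σ ∈ run step_a σ₁ (as_c.filterMap ζ), (s, σ) ∈ α by
    intro as_c s hs
    exact h as_c s₀ σ₀ cond1 s hs
  intro as_c
  induction as_c with
  | nil =>
    intro s₁ σ₁ hα s hs
    simp only [run, Set.mem_singleton_iff] at hs
    subst hs
    exact ⟨σ₁, by simp [run], hα⟩
  | cons a as ih =>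
    intro s₁ σ₁ hα s hs
    simp only [run, Set.mem_iUnion] at hs
    obtain ⟨s', hs', hrun⟩ := hs
    cases hz : ζ a with
    | none =>
      have := ih s' σ₁ (cond2 s₁ σ₁ a s' hα hs' hz) s hrun
      simpa [List.filterMap_cons, hz] using this
    | some a_a =>
      obtain ⟨σ', hσ', hα'⟩ := cond3 s₁ σ₁ a a_a s' hα hs' hz
      obtain ⟨σ, hσ, hαf⟩ := ih s' σ' hα' s hrun
      refine ⟨σ, ?_, hαf⟩
      simp only [List.filterMap_cons, hz, run, Set.mem_iUnion]
      exact ⟨σ', hσ', hσ⟩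
end

section
/- In the lock-protected message-queue model, the rely and guarantee conditions of different CPUs are compatible: for all CPUs κ ≠ κ', G(κ) ⊆ R(κ'). -/
/-- Concrete kernel state: actual queue contents, ghost observable queue
contents, queue sizes, and a lock per queue. -/
structure CState (Q Msg CPU : Type*) where
  que : Q → List Msg
  obq : Q → List Msg
  size : Q → ℕ
  lock : Q → Option CPU

variable {Q Msg CPU : Type*}

/-- The rely condition of CPU `κ`: while `κ` holds the lock of a queue, the
environment leaves that queue's contents, observable contents and size
unchanged. -/
def Rely (κ : CPU) : Set (CState Q Msg CPU × CState Q Msg CPU) :=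
  {p | ∀ q, p.1.lock q = some κ →
    p.2.que q = p.1.que q ∧ p.2.obq q = p.1.obq q ∧ p.2.size q = p.1.size q}

/-- The guarantee condition of CPU `κ`: it either stutters, acquires a free
lock, updates the contents/size of a queue whose lock it holds, or releases
a lock it holds while updating the observable contents of that queue. -/
def Guar [DecidableEq Q] (κ : CPU) :
    Set (CState Q Msg CPU × CState Q Msg CPU) :=
  {p | p.2 = p.1 ∨
    (∃ q, p.1.lock q = none ∧
      p.2 = { p.1 with lock := Function.update p.1.lock q (some κ) }) ∨
    (∃ q nque nsize, p.1.lock q = some κ ∧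
      p.2 = { p.1 with que := Function.update p.1.que q nque,
                       size := Function.update p.1.size q nsize }) ∨
    (∃ q nobq, p.1.lock q = some κ ∧
      p.2 = { p.1 with lock := Function.update p.1.lock q none,
                       obq := Function.update p.1.obq q nobq })}

/-- Rely and guarantee conditions of different CPUs are compatible. -/
theorem stmt_17 [DecidableEq Q] (κ κ' : CPU) (hne : κ ≠ κ') :
    (Guar κ : Set (CState Q Msg CPU × CState Q Msg CPU)) ⊆ Rely κ' := by
  rintro ⟨s, s'⟩ h q hq
  rcases h with h | ⟨r, hr, h⟩ | ⟨r, nque, nsize, hr, h⟩ | ⟨r, nobq, hr, h⟩ <;>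
    simp only [h] <;> simp_all [Function.update] <;> first | (constructor <;> rintro rfl <;> simp_all) | (rintro rfl; simp_all)
end
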